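/- Let n ≥ 2 and let σ = Equiv.swap a b be a transposition of Fin n (a ≠ b). Then for every k : ℕ, the number of fixed points of σ^{⊙k}, as an integer, equals the alternating sum ∑_{ℓ=0}^{k} (−1)^ℓ * multichoose (n − 1) (k − ℓ). -/

import Mathlib

/-- The `k`-th symmetric tensor power of a permutation `σ` of `Fin n`: the permutation of
`Sym (Fin n) k` sending a multiset `m` to `Sym.map σ m`. -/
def Equiv.Perm.symPow {n : ℕ} (σ : Equiv.Perm (Fin n)) (k : ℕ) :
    Equiv.Perm (Sym (Fin n) k) :=
  (Sym.equivCongr σ : Sym (Fin n) k ≃ Sym (Fin n) k)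

/-- The number of fixed points of a permutation of a finite type. -/
def fixCount {α : Type*} [Fintype α] [DecidableEq α] (τ : Equiv.Perm α) : ℕ :=
  Fintype.card {x : α // τ x = x}

/-- `cycleCount τ s` is the number of cycles of length `s` in the cycle decomposition of `τ`;
for `s = 1` this is the number of fixed points. -/
def cycleCount {α : Type*} [Fintype α] [DecidableEq α] (τ : Equiv.Perm α) (s : ℕ) : ℕ :=
  if s = 1 then fixCount τ
  else (τ.cycleFactorsFinset.filter (fun c => c.support.card = s)).card

open Multiset Finset

lemma map_swap_eq_iff {α : Type*} [DecidableEq α] (a b : α) (m : Multiset α) :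
    m.map (Equiv.swap a b) = m ↔ m.count a = m.count b := by
  constructor
  · intro h
    have := Multiset.count_map_eq_count' _ m (Equiv.injective (Equiv.swap a b)) a
    rw [h, Equiv.swap_apply_left] at this
    exact this.symm
  · intro h
    ext x
    have hc : (m.map (Equiv.swap a b)).count x = m.count (Equiv.swap a b x) := by
      conv_lhs => rw [show x = Equiv.swap a b (Equiv.swap a b x) by simp]
      exact Multiset.count_map_eq_count' _ m (Equiv.injective _) _
    rw [hc]
    rcases eq_or_ne x a with rfl | hxa
    · simp [h]
    rcases eq_or_ne x b with rfl | hxb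
    · simp [h]
    · rw [Equiv.swap_apply_of_ne_of_ne hxa hxb]

section counting

variable {α : Type*} [DecidableEq α] [Fintype α] (a b : α)

/-- multisets avoiding two fixed distinct elements -/
def avoidEquiv (k : ℕ) :
    {s : Sym α k // a ∉ s ∧ b ∉ s} ≃ Sym {x : α // x ≠ a ∧ x ≠ b} k where
  toFun s := ⟨(s.1 : Multiset α).attach.map
      (fun x => (⟨x.1, fun h => s.2.1 (Sym.mem_coe.1
                          (Eq.subst (motive := fun y => y ∈ (s.1 : Multiset α)) h x.2)),
                       fun h => s.2.2 (Sym.mem_coe.1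
                          (Eq.subst (motive := fun y => y ∈ (s.1 : Multiset α)) h x.2))⟩ :
        {x : α // x ≠ a ∧ x ≠ b})),
    by simp [s.1.2]⟩
  invFun t := ⟨⟨(t : Multiset {x : α // x ≠ a ∧ x ≠ b}).map Subtype.val, by simp [t.2]⟩,
    by
      constructor <;> intro h <;>
        · obtain ⟨x, _, hx⟩ := Multiset.mem_map.1 (Sym.mem_coe.1 h)
          first
          | exact x.2.1 hx
          | exact x.2.2 hx⟩
  left_inv s := by
    apply Subtype.ext; apply Subtype.ext
    show ((s.1 : Multiset α).attach.map _).map Subtype.val = (s.1 : Multiset α)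
    rw [Multiset.map_map]
    simpa using Multiset.attach_map_val (s.1 : Multiset α)
  right_inv t := by
    apply Subtype.ext
    apply Multiset.map_injective (Subtype.val_injective)
    dsimp only
    rw [Multiset.map_map]
    exact Multiset.attach_map_val (((t : Multiset {x : α // x ≠ a ∧ x ≠ b})).map Subtype.val)

end counting

section counting2

variable {n : ℕ} (a b : Fin n)

/-- the "balanced" predicate -/
def bal (k : ℕ) (s : Sym (Fin n) k) : Prop :=
  (s : Multiset (Fin n)).count a = (s : Multiset (Fin n)).count b

instance (k : ℕ) : DecidablePred (bal a b k) := fun _ => by unfold bal; infer_instance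

lemma card_avoid (hab : a ≠ b) (hn : 2 ≤ n) (k : ℕ) :
    Fintype.card {s : Sym (Fin n) k // a ∉ s ∧ b ∉ s} = Nat.multichoose (n - 2) k := by
  rw [Fintype.card_congr (avoidEquiv a b k), Sym.card_sym_eq_multichoose]
  congr 1
  rw [Fintype.card_subtype]
  have h1 : Finset.filter (fun x => x ≠ a ∧ x ≠ b) Finset.univ
      = (Finset.univ : Finset (Fin n)) \ {a, b} := by
    ext x; simp [not_or]
  rw [h1, Finset.card_sdiff_of_subset (by simp), Finset.card_pair hab]
  simp

/-- adding a pair {a, b} to a balanced multiset -/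
def addPairEquiv (hab : a ≠ b) (k : ℕ) :
    {s : Sym (Fin n) k // bal a b k s} ≃
      {s : Sym (Fin n) (k + 2) // bal a b (k + 2) s ∧ a ∈ s} where
  toFun t := ⟨⟨a ::ₘ b ::ₘ (t.1 : Multiset (Fin n)), by simp [t.1.2]⟩,
    by
      have ht := t.2
      unfold bal at ht ⊢
      show Multiset.count a (a ::ₘ b ::ₘ (t.1 : Multiset (Fin n)))
          = Multiset.count b (a ::ₘ b ::ₘ (t.1 : Multiset (Fin n)))
      rw [Multiset.count_cons_self, Multiset.count_cons_of_ne hab,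
        Multiset.count_cons_of_ne hab.symm, Multiset.count_cons_self, ht],
    by
      show a ∈ (a ::ₘ b ::ₘ (t.1 : Multiset (Fin n)))
      exact Multiset.mem_cons_self ..⟩
  invFun s := by
    have ha : a ∈ (s.1 : Multiset (Fin n)) := Sym.mem_coe.2 s.2.2
    have hb : b ∈ (s.1 : Multiset (Fin n)) := by
      rw [← Multiset.count_pos, ← s.2.1, Multiset.count_pos]
      exact ha
    have hb' : b ∈ (s.1 : Multiset (Fin n)).erase a :=
      (Multiset.mem_erase_of_ne hab.symm).2 hb
    refine ⟨⟨((s.1 : Multiset (Fin n)).erase a).erase b, ?_⟩, ?_⟩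
    · have hcard : Multiset.card (s.1 : Multiset (Fin n)) = k + 2 := s.1.2
      rw [Multiset.card_erase_of_mem hb', Multiset.card_erase_of_mem ha, hcard]
      rfl
    · unfold bal
      have h2 := s.2.1
      unfold bal at h2
      show Multiset.count a (((s.1 : Multiset (Fin n)).erase a).erase b)
          = Multiset.count b (((s.1 : Multiset (Fin n)).erase a).erase b)
      rw [Multiset.count_erase_of_ne hab, Multiset.count_erase_self,
        Multiset.count_erase_self, Multiset.count_erase_of_ne hab.symm, h2]
  left_inv t := by
    apply Subtype.ext; apply Subtype.ext
    show ((a ::ₘ b ::ₘ (t.1 : Multiset (Fin n))).erase a).erase b = (t.1 : Multiset (Fin n))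
    rw [Multiset.erase_cons_head, Multiset.erase_cons_head]
  right_inv s := by
    apply Subtype.ext; apply Subtype.ext
    show a ::ₘ b ::ₘ ((s.1 : Multiset (Fin n)).erase a).erase b = (s.1 : Multiset (Fin n))
    have ha : a ∈ (s.1 : Multiset (Fin n)) := Sym.mem_coe.2 s.2.2
    have hb : b ∈ (s.1 : Multiset (Fin n)) := by
      rw [← Multiset.count_pos, ← s.2.1, Multiset.count_pos]
      exact ha
    have hb' : b ∈ (s.1 : Multiset (Fin n)).erase a :=
      (Multiset.mem_erase_of_ne hab.symm).2 hb
    rw [Multiset.cons_erase hb', Multiset.cons_erase ha]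

/-- balanced multisets not containing `a` avoid both `a` and `b` -/
lemma bal_not_mem_iff (hab : a ≠ b) (k : ℕ) (s : Sym (Fin n) k) :
    (bal a b k s ∧ a ∉ s) ↔ (a ∉ s ∧ b ∉ s) := by
  unfold bal
  rw [← Sym.mem_coe, ← Sym.mem_coe, ← Multiset.count_pos, ← Multiset.count_pos]
  omega

lemma card_split (k : ℕ) :
    Fintype.card {s : Sym (Fin n) k // bal a b k s}
      = Fintype.card {s : Sym (Fin n) k // bal a b k s ∧ a ∈ s}
        + Fintype.card {s : Sym (Fin n) k // bal a b k s ∧ a ∉ s} := by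
  rw [Fintype.card_congr (Equiv.sumCompl (fun x : {s : Sym (Fin n) k // bal a b k s} =>
      a ∈ x.1)).symm, Fintype.card_sum]
  congr 1
  · exact Fintype.card_congr
      (Equiv.subtypeSubtypeEquivSubtypeInter (bal a b k) (fun s => a ∈ s))
  · exact Fintype.card_congr
      (Equiv.subtypeSubtypeEquivSubtypeInter (bal a b k) (fun s => a ∉ s))

lemma balCard_rec (hab : a ≠ b) (hn : 2 ≤ n) (k : ℕ) :
    Fintype.card {s : Sym (Fin n) (k + 2) // bal a b (k + 2) s}
      = Fintype.card {s : Sym (Fin n) k // bal a b k s} + Nat.multichoose (n - 2) (k + 2) := by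
  rw [card_split a b (k + 2)]
  congr 1
  · exact (Fintype.card_congr (addPairEquiv a b hab k)).symm
  · rw [Fintype.card_congr (Equiv.subtypeEquivRight (bal_not_mem_iff a b hab (k + 2)))]
    exact card_avoid a b hab hn (k + 2)

lemma balCard_zero : Fintype.card {s : Sym (Fin n) 0 // bal a b 0 s} = 1 := by
  rw [Fintype.card_eq_one_iff]
  refine ⟨⟨(Sym.nil : Sym (Fin n) 0), by unfold bal; simp⟩, ?_⟩
  intro y
  apply Subtype.ext
  apply Subsingleton.elim

lemma balCard_one (hab : a ≠ b) (hn : 2 ≤ n) :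
    Fintype.card {s : Sym (Fin n) 1 // bal a b 1 s} = n - 2 := by
  have h1 : ∀ s : Sym (Fin n) 1, bal a b 1 s ↔ (a ∉ s ∧ b ∉ s) := by
    intro s
    rw [← bal_not_mem_iff a b hab]
    constructor
    · intro h
      refine ⟨h, ?_⟩
      intro hm
      have ha := Sym.mem_coe.2 hm
      have hb : b ∈ (s : Multiset (Fin n)) := by
        rw [← Multiset.count_pos, ← h, Multiset.count_pos]
        exact ha
      have hb' : b ∈ (s : Multiset (Fin n)).erase a :=
        (Multiset.mem_erase_of_ne hab.symm).2 hb
      have hc := Multiset.card_erase_of_mem ha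
      have hcard : Multiset.card (s : Multiset (Fin n)) = 1 := s.2
      rw [hcard] at hc
      have : (s : Multiset (Fin n)).erase a = 0 := by
        rw [← Multiset.card_eq_zero, hc]
        rfl
      rw [this] at hb'
      simp at hb'
    · exact fun h => h.1
  rw [Fintype.card_congr (Equiv.subtypeEquivRight h1), card_avoid a b hab hn 1,
    Nat.multichoose_eq]
  simp

end counting2

section intside

/-- the alternating sum -/
noncomputable def A (n k : ℕ) : ℤ :=
  ∑ ℓ ∈ Finset.range (k + 1), (-1 : ℤ) ^ ℓ * (Nat.multichoose (n - 1) (k - ℓ) : ℤ)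

lemma A_zero (n : ℕ) : A n 0 = 1 := by
  simp [A]

lemma A_one (n : ℕ) (hn : 2 ≤ n) : A n 1 = ((n : ℤ) - 2) := by
  obtain ⟨m, rfl⟩ : ∃ m, n = m + 2 := ⟨n - 2, by omega⟩
  simp [A, Finset.sum_range_succ, Nat.multichoose_eq, Nat.choose_one_right]

lemma A_rec (n : ℕ) (hn : 2 ≤ n) (k : ℕ) :
    A n (k + 2) = A n k + (Nat.multichoose (n - 2) (k + 2) : ℤ) := by
  obtain ⟨m, rfl⟩ : ∃ m, n = m + 2 := ⟨n - 2, by omega⟩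
  have hs : m + 2 - 1 = m + 1 := by omega
  have hs2 : m + 2 - 2 = m := by omega
  rw [A, A, hs, hs2]
  rw [Finset.sum_range_succ' _ (k + 2), Finset.sum_range_succ' _ (k + 1)]
  have hterm : ∀ ℓ ∈ Finset.range (k + 1),
      (-1 : ℤ) ^ (ℓ + 1 + 1) * (Nat.multichoose (m + 1) (k + 2 - (ℓ + 1 + 1)) : ℤ)
        = (-1 : ℤ) ^ ℓ * (Nat.multichoose (m + 1) (k - ℓ) : ℤ) := by
    intro ℓ _
    have : k + 2 - (ℓ + 1 + 1) = k - ℓ := by omega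
    rw [this]
    ring
  rw [Finset.sum_congr rfl hterm]
  have hpas := Nat.multichoose_succ_succ m (k + 1)
  have h1 : k + 2 - (0 + 1) = k + 1 := by omega
  rw [h1]
  simp only [Nat.sub_zero, pow_zero, pow_succ, pow_zero]
  push_cast [hpas]
  ring

end intside

/-- Alternating-sum formula for the number of fixed points of the symmetric tensor power of a
transposition. -/
theorem fixCount_symPow_swap (n : ℕ) (hn : 2 ≤ n) (a b : Fin n) (hab : a ≠ b) (k : ℕ) :
    (fixCount ((Equiv.swap a b).symPow k) : ℤ) =
      ∑ ℓ ∈ Finset.range (k + 1),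
        (-1 : ℤ) ^ ℓ * (Nat.multichoose (n - 1) (k - ℓ) : ℤ) := by
  have hfix : ∀ k, fixCount ((Equiv.swap a b).symPow k)
      = Fintype.card {s : Sym (Fin n) k // bal a b k s} := by
    intro k
    apply Fintype.card_congr
    apply Equiv.subtypeEquivRight
    intro s
    show Sym.map (Equiv.swap a b) s = s ↔ _
    rw [← Sym.coe_inj, Sym.coe_map]
    exact map_swap_eq_iff a b _
  rw [show (∑ ℓ ∈ Finset.range (k + 1),
      (-1 : ℤ) ^ ℓ * (Nat.multichoose (n - 1) (k - ℓ) : ℤ)) = A n k from rfl]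
  induction k using Nat.strong_induction_on with
  | _ k ih =>
    match k with
    | 0 => rw [hfix 0, balCard_zero, A_zero]; simp
    | 1 =>
      rw [hfix 1, balCard_one a b hab hn, A_one n hn]
      have : (2 : ℤ) ≤ (n : ℤ) := by exact_mod_cast hn
      push_cast [Nat.cast_sub hn]
      ring
    | (k + 2) =>
      rw [hfix (k + 2), balCard_rec a b hab hn k, A_rec n hn k]
      push_cast
      rw [← hfix k, ih k (by omega)]
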